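/- Let Λ be an ℕ=2 superpartition in fermionic sector M = (m̄, m̃, m̂), written as a quadruple (Λ̄̂; Λ̃; Λ̂; Λˢ) where Λ̄̂ is a partition with zeros allowed of length m̄, Λ̃ and Λ̂ are strictly decreasing sequences of nonnegative integers of lengths m̃ and m̂, and Λˢ is a partition. Define Λ^[0] as the weakly decreasing rearrangement of all entries, and Λ^[k] = (Λ + 1^{M_k})⁺ for k = 1,2,3, where M₁ = m̄, M₂ = m̄+m̃, M₃ = m̄+m̃+m̂, and Λ+1^{M_k} adds 1 to the first M_k entries of Λ viewed as a composition. Then the map Λ ↦ (Λ^[0], Λ^[1], Λ^[2], Λ^[3]) is injective on the set of superpartitions. -/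

import Mathlib

open Finset

/-- Add `1` to the first `m` entries of a composition. -/
def addOne (m : ℕ) {N : ℕ} (L : Fin N → ℕ) : Fin N → ℕ :=
  fun i => L i + if (i : ℕ) < m then 1 else 0

/-- The weakly decreasing (partition) rearrangement `L⁺` of a composition `L`. -/
def sortedDesc {N : ℕ} (L : Fin N → ℕ) : Fin N → ℕ :=
  fun i => (L ∘ Tuple.sort L) i.rev

/-- Dominance order: every partial sum of the decreasing rearrangement of `f` is at most the
corresponding partial sum for `g`. -/
def domLe {N : ℕ} (f g : Fin N → ℕ) : Prop :=
  ∀ k : Fin N,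
    ∑ i ∈ Finset.univ.filter (· ≤ k), sortedDesc f i ≤
      ∑ i ∈ Finset.univ.filter (· ≤ k), sortedDesc g i

/-- An `ℕ=2` superpartition of sector `M = (M₁, M₂−M₁, M₃−M₂)`: a composition of length `N`
whose first block (positions `< M₁`) is weakly decreasing (zeros allowed), whose second and
third blocks (positions in `[M₁,M₂)` and `[M₂,M₃)`) are strictly decreasing, and whose fourth
block is weakly decreasing. -/
def IsSuperPartition (M1 M2 M3 : ℕ) {N : ℕ} (L : Fin N → ℕ) : Prop :=
  (∀ i j : Fin N, (j : ℕ) < M1 → i ≤ j → L j ≤ L i) ∧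
  (∀ i j : Fin N, M1 ≤ (i : ℕ) → (j : ℕ) < M2 → i < j → L j < L i) ∧
  (∀ i j : Fin N, M2 ≤ (i : ℕ) → (j : ℕ) < M3 → i < j → L j < L i) ∧
  (∀ i j : Fin N, M3 ≤ (i : ℕ) → i ≤ j → L j ≤ L i)

/-- The dominance order on superpartitions: `O ≤ L` iff `O^[k] ≤ L^[k]` in the dominance order
on partitions for `k = 0,1,2,3`, where `Λ^[k] = (Λ + 1^{M_k})⁺` and `M₀ = 0`. -/
def superLe (M1 M2 M3 : ℕ) {N : ℕ} (O L : Fin N → ℕ) : Prop :=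
  ∀ k : Fin 4, domLe (addOne (![0, M1, M2, M3] k) O) (addOne (![0, M1, M2, M3] k) L)

/-- Number of indices `i` with `a ≤ i < b` and `L i ≥ t`. -/
private def cnt {N : ℕ} (L : Fin N → ℕ) (a b t : ℕ) : ℕ :=
  (Finset.univ.filter (fun i : Fin N => a ≤ (i : ℕ) ∧ (i : ℕ) < b ∧ t ≤ L i)).card

private lemma cnt_add {N : ℕ} (L : Fin N → ℕ) (a b c t : ℕ) (hab : a ≤ b) (hbc : b ≤ c) :
    cnt L a c t = cnt L a b t + cnt L b c t := by
  unfold cnt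
  rw [← Finset.card_union_of_disjoint, ← Finset.filter_or]
  · congr 1
    ext i
    simp only [Finset.mem_filter, Finset.mem_univ, true_and]
    omega
  · simp only [Finset.disjoint_left, Finset.mem_filter, Finset.mem_univ, true_and]
    intro i h1 h2
    omega

private lemma cnt_eq_zero {N : ℕ} (L : Fin N → ℕ) (a b t : ℕ) (h : ∀ i, L i < t) :
    cnt L a b t = 0 := by
  unfold cnt
  rw [Finset.card_eq_zero, Finset.filter_eq_empty_iff]
  intro i _
  have := h i
  omega

private lemma cnt_degenerate {N : ℕ} (L : Fin N → ℕ) (t : ℕ) : cnt L 0 0 t = 0 := by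
  unfold cnt
  rw [Finset.card_eq_zero, Finset.filter_eq_empty_iff]
  intro i _
  omega

private lemma addOne_count {N : ℕ} (L : Fin N → ℕ) (m t : ℕ) (_hm : m ≤ N) :
    (Finset.univ.filter (fun i : Fin N => t ≤ addOne m L i)).card
      = cnt L 0 m (t - 1) + cnt L m N t := by
  unfold cnt
  rw [← Finset.card_union_of_disjoint, ← Finset.filter_or]
  · congr 1
    ext i
    rw [Finset.mem_filter, Finset.mem_filter]
    simp only [Finset.mem_filter, Finset.mem_univ, true_and, addOne]
    have := i.isLt
    by_cases hi : (i : ℕ) < m <;> simp [hi] <;> omega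
  · simp only [Finset.disjoint_left, Finset.mem_filter, Finset.mem_univ, true_and]
    intro i h1 h2
    omega

private lemma perm_count {N : ℕ} (F G : Fin N → ℕ) (σ : Equiv.Perm (Fin N))
    (hσ : ∀ i, F (σ i) = G i) (t : ℕ) :
    (Finset.univ.filter (fun i => t ≤ G i)).card
      = (Finset.univ.filter (fun i => t ≤ F i)).card := by
  apply Finset.card_bij (fun i _ => σ i)
  · intro a ha
    simp only [Finset.mem_filter, Finset.mem_univ, true_and] at ha ⊢
    rw [hσ]; exact ha
  · intro a _ b _ hab
    exact σ.injective hab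
  · intro b hb
    refine ⟨σ.symm b, ?_, by simp⟩
    simp only [Finset.mem_filter, Finset.mem_univ, true_and] at hb ⊢
    rw [← hσ (σ.symm b)]
    simpa using hb

private lemma cnt_eq {N : ℕ} (L O : Fin N → ℕ) (m : ℕ) (hm : m ≤ N)
    (hT : ∀ t, cnt L 0 N t = cnt O 0 N t)
    (hA : ∀ t, cnt L 0 m (t - 1) + cnt L m N t = cnt O 0 m (t - 1) + cnt O m N t) :
    ∀ t, cnt L 0 m t = cnt O 0 m t := by
  set B := (Finset.univ.sup L) + (Finset.univ.sup O) + 1 with hB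
  have hLB : ∀ i, L i < B := fun i => by
    have := Finset.le_sup (f := L) (Finset.mem_univ i); omega
  have hOB : ∀ i, O i < B := fun i => by
    have := Finset.le_sup (f := O) (Finset.mem_univ i); omega
  have key : ∀ j t, B ≤ t + j → cnt L 0 m t = cnt O 0 m t := by
    intro j
    induction j with
    | zero =>
      intro t ht
      rw [cnt_eq_zero L _ _ _ (fun i => lt_of_lt_of_le (hLB i) (by omega)),
          cnt_eq_zero O _ _ _ (fun i => lt_of_lt_of_le (hOB i) (by omega))]
    | succ j ih =>
      intro t ht
      have h1 := ih (t + 1) (by omega)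
      have h2 := hT (t + 1)
      have h3 := hA (t + 1)
      have e1 := cnt_add L 0 m N (t + 1) (Nat.zero_le m) hm
      have e2 := cnt_add O 0 m N (t + 1) (Nat.zero_le m) hm
      simp only [Nat.add_sub_cancel] at h3
      omega
  intro t
  exact key B t (by omega)

private lemma block_le {N : ℕ} (L O : Fin N → ℕ) (a b : ℕ)
    (monoL : ∀ i j : Fin N, a ≤ (i : ℕ) → (j : ℕ) < b → i ≤ j → L j ≤ L i)
    (monoO : ∀ i j : Fin N, a ≤ (i : ℕ) → (j : ℕ) < b → i ≤ j → O j ≤ O i)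
    (hcnt : ∀ t, cnt L a b t = cnt O a b t)
    (i : Fin N) (hia : a ≤ (i : ℕ)) (hib : (i : ℕ) < b) : L i ≤ O i := by
  by_contra hlt
  push_neg at hlt
  have h1 : (Finset.univ.filter (fun j : Fin N => a ≤ (j : ℕ) ∧ (j : ℕ) ≤ (i : ℕ))).card
      ≤ cnt L a b (L i) := by
    apply Finset.card_le_card
    intro j hj
    simp only [Finset.mem_filter, Finset.mem_univ, true_and] at hj ⊢
    exact ⟨hj.1, lt_of_le_of_lt hj.2 hib, monoL j i hj.1 hib (Fin.le_def.mpr hj.2)⟩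
  have h2 : cnt O a b (L i)
      ≤ (Finset.univ.filter (fun j : Fin N => a ≤ (j : ℕ) ∧ (j : ℕ) < (i : ℕ))).card := by
    apply Finset.card_le_card
    intro j hj
    simp only [Finset.mem_filter, Finset.mem_univ, true_and] at hj ⊢
    refine ⟨hj.1, ?_⟩
    by_contra hji
    push_neg at hji
    have := monoO i j hia hj.2.1 (Fin.le_def.mpr hji)
    omega
  have h3 : (Finset.univ.filter (fun j : Fin N => a ≤ (j : ℕ) ∧ (j : ℕ) < (i : ℕ))).card
      < (Finset.univ.filter (fun j : Fin N => a ≤ (j : ℕ) ∧ (j : ℕ) ≤ (i : ℕ))).card := by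
    apply Finset.card_lt_card
    rw [Finset.ssubset_iff_of_subset]
    · refine ⟨i, by simp [hia], by simp⟩
    · intro j hj
      simp only [Finset.mem_filter, Finset.mem_univ, true_and] at hj ⊢
      omega
  have := hcnt (L i)
  omega

/-- The map `Λ ↦ (Λ^[0], Λ^[1], Λ^[2], Λ^[3])` is injective on superpartitions: if for each
`k = 0,1,2,3` the compositions `L + 1^{M_k}` and `O + 1^{M_k}` are rearrangements of each other
(equivalently, `L^[k] = O^[k]`), then `L = O`. -/
theorem superPartition_injective (N M1 M2 M3 : ℕ)
    (h12 : M1 ≤ M2) (h23 : M2 ≤ M3) (h3N : M3 ≤ N)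
    (L O : Fin N → ℕ)
    (hL : IsSuperPartition M1 M2 M3 L) (hO : IsSuperPartition M1 M2 M3 O)
    (h : ∀ k : Fin 4, ∃ σ : Equiv.Perm (Fin N),
      ∀ i, addOne (![0, M1, M2, M3] k) L (σ i) = addOne (![0, M1, M2, M3] k) O i) :
    L = O := by
  obtain ⟨hL1, hL2, hL3, hL4⟩ := hL
  obtain ⟨hO1, hO2, hO3, hO4⟩ := hO
  have hM1N : M1 ≤ N := le_trans h12 (le_trans h23 h3N)
  have hM2N : M2 ≤ N := le_trans h23 h3N
  have hT : ∀ t, cnt L 0 N t = cnt O 0 N t := by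
    obtain ⟨σ, hσ⟩ := h 0
    intro t
    have hp := perm_count (addOne 0 L) (addOne 0 O) σ (fun i => hσ i) t
    rw [addOne_count L 0 t (Nat.zero_le N), addOne_count O 0 t (Nat.zero_le N)] at hp
    have z1 := cnt_degenerate L (t - 1)
    have z2 := cnt_degenerate O (t - 1)
    omega
  have key : ∀ m, m ≤ N →
      (∃ σ : Equiv.Perm (Fin N), ∀ i, addOne m L (σ i) = addOne m O i) →
      ∀ t, cnt L 0 m t = cnt O 0 m t := by
    rintro m hm ⟨σ, hσ⟩
    apply cnt_eq L O m hm hT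
    intro t
    have hp := perm_count (addOne m L) (addOne m O) σ hσ t
    rw [addOne_count L m t hm, addOne_count O m t hm] at hp
    omega
  have hc1 : ∀ t, cnt L 0 M1 t = cnt O 0 M1 t := key M1 hM1N (h 1)
  have hc2 : ∀ t, cnt L 0 M2 t = cnt O 0 M2 t := key M2 hM2N (h 2)
  have hc3 : ∀ t, cnt L 0 M3 t = cnt O 0 M3 t := key M3 h3N (h 3)
  have hb2 : ∀ t, cnt L M1 M2 t = cnt O M1 M2 t := by
    intro t
    have a1 := cnt_add L 0 M1 M2 t (Nat.zero_le _) h12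
    have a2 := cnt_add O 0 M1 M2 t (Nat.zero_le _) h12
    have := hc1 t; have := hc2 t; omega
  have hb3 : ∀ t, cnt L M2 M3 t = cnt O M2 M3 t := by
    intro t
    have a1 := cnt_add L 0 M2 M3 t (Nat.zero_le _) h23
    have a2 := cnt_add O 0 M2 M3 t (Nat.zero_le _) h23
    have := hc2 t; have := hc3 t; omega
  have hb4 : ∀ t, cnt L M3 N t = cnt O M3 N t := by
    intro t
    have a1 := cnt_add L 0 M3 N t (Nat.zero_le _) h3N
    have a2 := cnt_add O 0 M3 N t (Nat.zero_le _) h3N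
    have := hc3 t; have := hT t; omega
  -- monotonicity on each block
  have m1L : ∀ i j : Fin N, 0 ≤ (i : ℕ) → (j : ℕ) < M1 → i ≤ j → L j ≤ L i :=
    fun i j _ hj hij => hL1 i j hj hij
  have m1O : ∀ i j : Fin N, 0 ≤ (i : ℕ) → (j : ℕ) < M1 → i ≤ j → O j ≤ O i :=
    fun i j _ hj hij => hO1 i j hj hij
  have strictWeak : ∀ (f : Fin N → ℕ) (A B : ℕ),
      (∀ i j : Fin N, A ≤ (i : ℕ) → (j : ℕ) < B → i < j → f j < f i) →
      ∀ i j : Fin N, A ≤ (i : ℕ) → (j : ℕ) < B → i ≤ j → f j ≤ f i := by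
    intro f A B hs i j hi hj hij
    rcases eq_or_lt_of_le hij with hEq | hLt
    · exact le_of_eq (congrArg f hEq.symm)
    · exact (hs i j hi hj hLt).le
  have m4L : ∀ i j : Fin N, M3 ≤ (i : ℕ) → (j : ℕ) < N → i ≤ j → L j ≤ L i :=
    fun i j hi _ hij => hL4 i j hi hij
  have m4O : ∀ i j : Fin N, M3 ≤ (i : ℕ) → (j : ℕ) < N → i ≤ j → O j ≤ O i :=
    fun i j hi _ hij => hO4 i j hi hij
  funext i
  rcases lt_or_ge (i : ℕ) M1 with c1 | c1
  · exact le_antisymm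
      (block_le L O 0 M1 m1L m1O hc1 i (Nat.zero_le _) c1)
      (block_le O L 0 M1 m1O m1L (fun t => (hc1 t).symm) i (Nat.zero_le _) c1)
  rcases lt_or_ge (i : ℕ) M2 with c2 | c2
  · exact le_antisymm
      (block_le L O M1 M2 (strictWeak L M1 M2 hL2) (strictWeak O M1 M2 hO2) hb2 i c1 c2)
      (block_le O L M1 M2 (strictWeak O M1 M2 hO2) (strictWeak L M1 M2 hL2)
        (fun t => (hb2 t).symm) i c1 c2)
  rcases lt_or_ge (i : ℕ) M3 with c3 | c3
  · exact le_antisymm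
      (block_le L O M2 M3 (strictWeak L M2 M3 hL3) (strictWeak O M2 M3 hO3) hb3 i c2 c3)
      (block_le O L M2 M3 (strictWeak O M2 M3 hO3) (strictWeak L M2 M3 hL3)
        (fun t => (hb3 t).symm) i c2 c3)
  · exact le_antisymm
      (block_le L O M3 N m4L m4O hb4 i c3 i.isLt)
      (block_le O L M3 N m4O m4L (fun t => (hb4 t).symm) i c3 i.isLt)
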